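/- Let B = (V, R) be a dense betweenness instance and C a maximal conflict packing. Then there exists a linear ordering σ of V such that every triplet of R inconsistent with σ has all three of its vertices in V(C). -/

import Mathlib

variable {V : Type*} [DecidableEq V]

/-- `BtwOrd σ a b c`: `b` lies between `a` and `c` in the ordering `σ`. -/
def BtwOrd (σ : V → ℕ) (a b c : V) : Prop :=
  (σ a < σ b ∧ σ b < σ c) ∨ (σ c < σ b ∧ σ b < σ a)

/-- rational version of `BtwOrd`. -/
def BtwQ (π : V → ℚ) (a b c : V) : Prop :=
  (π a < π b ∧ π b < π c) ∨ (π c < π b ∧ π b < π a)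

lemma btwq_neg (π : V → ℚ) (a b c : V) :
    BtwQ (fun v => -(π v)) a b c ↔ BtwQ π a b c := by
  have key : ∀ x y : V, (fun v => -(π v)) x < (fun v => -(π v)) y ↔ π y < π x := by
    intro x y
    show -π x < -π y ↔ _
    constructor <;> intro <;> linarith
  unfold BtwQ
  rw [key, key, key, key]
  tauto

lemma trip_comm12 (a b c : V) : ({a, b, c} : Finset V) = {b, a, c} :=
  Finset.insert_comm a b {c}

lemma trip_comm23 (a b c : V) : ({a, b, c} : Finset V) = {a, c, b} := by
  simp [Finset.pair_comm b c]

lemma trip_rot (a b c : V) : ({a, b, c} : Finset V) = {c, a, b} := by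
  rw [trip_comm23, trip_comm12]

lemma trip_rot2 (a b c : V) : ({a, b, c} : Finset V) = {b, c, a} := by
  rw [trip_comm12, trip_comm23]

/-- extend a partial order-embedding by one point. -/
lemma order_extend (X : Finset V) (π ρ : V → ℚ) (z : V) (hzX : z ∉ X)
    (hmono : ∀ x ∈ X, ∀ y ∈ X, ρ x < ρ y → π x < π y)
    (hρz : ∀ x ∈ X, ρ x ≠ ρ z)
    (A B : ℚ) (hAB : A < B) (hb : ∀ x ∈ X, A < π x ∧ π x < B) :
    ∃ t, A < t ∧ t < B ∧ ∀ x ∈ insert z X, ∀ y ∈ insert z X,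
      ρ x < ρ y → Function.update π z t x < Function.update π z t y := by
  classical
  set Lo : Finset ℚ := insert A ((X.filter (fun x => ρ x < ρ z)).image π) with hLo
  set Hi : Finset ℚ := insert B ((X.filter (fun x => ρ z < ρ x)).image π) with hHi
  have hLne : Lo.Nonempty := ⟨A, Finset.mem_insert_self _ _⟩
  have hHne : Hi.Nonempty := ⟨B, Finset.mem_insert_self _ _⟩
  set L := Lo.max' hLne with hL
  set U := Hi.min' hHne with hU
  have key : ∀ l ∈ Lo, ∀ u ∈ Hi, l < u := by
    intro l hl u hu
    rw [hLo, Finset.mem_insert] at hl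
    rw [hHi, Finset.mem_insert] at hu
    rcases hl with rfl | hl
    · rcases hu with rfl | hu
      · exact hAB
      · obtain ⟨y, hy, rfl⟩ := Finset.mem_image.mp hu
        exact (hb y (Finset.mem_filter.mp hy).1).1
    · obtain ⟨x, hx, rfl⟩ := Finset.mem_image.mp hl
      rcases hu with rfl | hu
      · exact (hb x (Finset.mem_filter.mp hx).1).2
      · obtain ⟨y, hy, rfl⟩ := Finset.mem_image.mp hu
        have hx' := Finset.mem_filter.mp hx
        have hy' := Finset.mem_filter.mp hy
        exact hmono x hx'.1 y hy'.1 (hx'.2.trans hy'.2)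
  have hLU : L < U := by
    rw [hL, Finset.max'_lt_iff]
    intro y hy
    rw [hU, Finset.lt_min'_iff]
    intro u hu
    exact key y hy u hu
  refine ⟨(L + U) / 2, ?_, ?_, ?_⟩
  · have : A ≤ L := Finset.le_max' _ _ (Finset.mem_insert_self _ _)
    linarith
  · have : U ≤ B := Finset.min'_le _ _ (Finset.mem_insert_self _ _)
    linarith
  · intro x hx y hy hxy
    by_cases hxz : x = z
    · by_cases hyz : y = z
      · rw [hxz, hyz] at hxy; exact absurd hxy (lt_irrefl _)
      · have hy' : y ∈ X := by
          rcases Finset.mem_insert.mp hy with h | h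
          · exact absurd h hyz
          · exact h
        rw [hxz] at hxy ⊢
        rw [Function.update_self, Function.update_of_ne hyz]
        have hmem : π y ∈ Hi := by
          rw [hHi, Finset.mem_insert]
          exact Or.inr (Finset.mem_image.mpr ⟨y, Finset.mem_filter.mpr ⟨hy', hxy⟩, rfl⟩)
        have := Finset.min'_le _ _ hmem
        linarith
    · have hx' : x ∈ X := by
        rcases Finset.mem_insert.mp hx with h | h
        · exact absurd h hxz
        · exact h
      by_cases hyz : y = z
      · rw [hyz] at hxy ⊢
        rw [Function.update_self, Function.update_of_ne hxz]
        have hmem : π x ∈ Lo := by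
          rw [hLo, Finset.mem_insert]
          exact Or.inr (Finset.mem_image.mpr ⟨x, Finset.mem_filter.mpr ⟨hx', hxy⟩, rfl⟩)
        have := Finset.le_max' _ _ hmem
        linarith
      · have hy' : y ∈ X := by
          rcases Finset.mem_insert.mp hy with h | h
          · exact absurd h hyz
          · exact h
        rw [Function.update_of_ne hxz, Function.update_of_ne hyz]
        exact hmono x hx' y hy' hxy

/-- two injective placements of three points with the same middle are
monotone or antitone relative to each other. -/
lemma mono_or_anti (π ρ : V → ℚ) (a b c : V)
    (hπ : BtwQ π a b c) (hρ : BtwQ ρ a b c) :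
    (∀ x, (x = a ∨ x = b ∨ x = c) → ∀ y, (y = a ∨ y = b ∨ y = c) →
      ρ x < ρ y → π x < π y) ∨
    (∀ x, (x = a ∨ x = b ∨ x = c) → ∀ y, (y = a ∨ y = b ∨ y = c) →
      ρ x < ρ y → π y < π x) := by
  rcases hπ with ⟨h1, h2⟩ | ⟨h1, h2⟩ <;> rcases hρ with ⟨g1, g2⟩ | ⟨g1, g2⟩
  · left; rintro x (rfl | rfl | rfl) y (rfl | rfl | rfl) h <;> linarith
  · right; rintro x (rfl | rfl | rfl) y (rfl | rfl | rfl) h <;> linarith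
  · right; rintro x (rfl | rfl | rfl) y (rfl | rfl | rfl) h <;> linarith
  · left; rintro x (rfl | rfl | rfl) y (rfl | rfl | rfl) h <;> linarith

/-- convert an injective rational placement into a natural-valued one. -/
lemma rank_conv [Fintype V] (f : V → ℚ) (hf : Function.Injective f) :
    ∃ g : V → ℕ, Function.Injective g ∧ ∀ a b : V, f a < f b ↔ g a < g b := by
  classical
  set g : V → ℕ := fun v => (Finset.univ.filter (fun w => f w < f v)).card with hg
  have mono : ∀ a b : V, f a < f b → g a < g b := by
    intro a b hab
    apply Finset.card_lt_card
    constructor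
    · intro w hw
      simp only [Finset.mem_filter, Finset.mem_univ, true_and] at hw ⊢
      linarith
    · intro hsub
      have : a ∈ Finset.univ.filter (fun w => f w < f b) := by
        simp only [Finset.mem_filter, Finset.mem_univ, true_and]; exact hab
      have := hsub this
      simp only [Finset.mem_filter, Finset.mem_univ, true_and] at this
      exact absurd this (lt_irrefl _)
  have iff : ∀ a b : V, f a < f b ↔ g a < g b := by
    intro a b
    refine ⟨mono a b, fun h => ?_⟩
    rcases lt_trichotomy (f a) (f b) with h' | h' | h'
    · exact h'
    · have hab := hf h'
      subst hab
      exact absurd h (lt_irrefl _)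
    · exact absurd (lt_trans h (mono b a h')) (lt_irrefl _)
  refine ⟨g, ?_, iff⟩
  intro a b hab
  by_contra hne
  rcases lt_or_gt_of_ne (fun h : f a = f b => hne (hf h)) with h | h
  · have := mono a b h; omega
  · have := mono b a h; omega

/-- `π` satisfies, on `S`, all triplets not entirely inside `Wst`. -/
def GSP (R : Finset V → V) (Wst : Finset V) (π : V → ℚ) (S : Finset V) : Prop :=
  ∀ a b c : V, a ∈ S → b ∈ S → c ∈ S → a ≠ b → a ≠ c → b ≠ c →
    R {a, b, c} = b → ¬(({a, b, c} : Finset V) ⊆ Wst) → BtwQ π a b c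

/-- lower endpoint of the constraint interval of pair `(u,v)`. -/
def loB (R : Finset V → V) (π : V → ℚ) (z u v : V) (m : ℚ) : ℚ :=
  if R {z, u, v} = z then π u else if R {z, u, v} = u then m else π v

/-- upper endpoint of the constraint interval of pair `(u,v)`. -/
def hiB (R : Finset V → V) (π : V → ℚ) (z u v : V) (M : ℚ) : ℚ :=
  if R {z, u, v} = z then π v else if R {z, u, v} = u then π u else M

section Bridge

variable (R : Finset V → V) (π : V → ℚ) (z u v : V) (m M t : ℚ)

lemma bridge_mk (hzu : z ≠ u) (hzv : z ≠ v) (huv : u ≠ v)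
    (houv : π u < π v) (hval3 : R {z, u, v} ∈ ({z, u, v} : Finset V))
    (hm : m < t) (hM : t < M)
    (sat : ∀ a b c : V, a ≠ b → a ≠ c → b ≠ c → ({a, b, c} : Finset V) = {z, u, v} →
      R {a, b, c} = b → BtwQ (Function.update π z t) a b c) :
    loB R π z u v m < t ∧ t < hiB R π z u v M := by
  have hπu : Function.update π z t u = π u := Function.update_of_ne (Ne.symm hzu) _ _
  have hπv : Function.update π z t v = π v := Function.update_of_ne (Ne.symm hzv) _ _
  have hπz : Function.update π z t z = t := Function.update_self _ _ _
  simp only [Finset.mem_insert, Finset.mem_singleton] at hval3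
  rcases hval3 with hc | hc | hc
  · have hb := sat u z v (Ne.symm hzu) huv hzv (trip_comm12 u z v) (by
      rw [trip_comm12 u z v]; exact hc)
    simp only [loB, hiB, if_pos hc]
    rcases hb with ⟨h1, h2⟩ | ⟨h1, h2⟩ <;> simp only [hπu, hπv, hπz] at h1 h2
    · exact ⟨h1, h2⟩
    · exact absurd houv (by linarith)
  · have hne : R {z, u, v} ≠ z := by rw [hc]; exact Ne.symm hzu
    have hb := sat z u v hzu hzv huv rfl hc
    simp only [loB, hiB, if_neg hne, if_pos hc]
    rcases hb with ⟨h1, h2⟩ | ⟨h1, h2⟩ <;> simp only [hπu, hπv, hπz] at h1 h2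
    · exact ⟨hm, h1⟩
    · exact absurd houv (by linarith)
  · have hne : R {z, u, v} ≠ z := by rw [hc]; exact Ne.symm hzv
    have hne2 : R {z, u, v} ≠ u := by rw [hc]; exact Ne.symm huv
    have hb := sat z v u hzv hzu (Ne.symm huv) (trip_comm23 z u v).symm (by
      rw [← trip_comm23 z u v]; exact hc)
    simp only [loB, hiB, if_neg hne, if_neg hne2]
    rcases hb with ⟨h1, h2⟩ | ⟨h1, h2⟩ <;> simp only [hπu, hπv, hπz] at h1 h2
    · exact absurd houv (by linarith)
    · exact ⟨h2, hM⟩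

lemma bridge_use (hzu : z ≠ u) (hzv : z ≠ v) (huv : u ≠ v)
    (houv : π u < π v) (hval3 : R {z, u, v} ∈ ({z, u, v} : Finset V))
    (h1 : loB R π z u v m < t) (h2 : t < hiB R π z u v M) :
    ∀ a b c : V, a ≠ b → a ≠ c → b ≠ c → ({a, b, c} : Finset V) = {z, u, v} →
      R {a, b, c} = b → BtwQ (Function.update π z t) a b c := by
  intro a b c hab hac hbc hset hR
  have hπu : Function.update π z t u = π u := Function.update_of_ne (Ne.symm hzu) _ _
  have hπv : Function.update π z t v = π v := Function.update_of_ne (Ne.symm hzv) _ _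
  have hπz : Function.update π z t z = t := Function.update_self _ _ _
  have hRb : R {z, u, v} = b := by rw [← hset]; exact hR
  have hmem : ∀ x : V, x ∈ ({a, b, c} : Finset V) ↔ (x = z ∨ x = u ∨ x = v) := by
    intro x; rw [hset]; simp [Finset.mem_insert]
  have hmema : a = z ∨ a = u ∨ a = v := (hmem a).mp (by simp)
  have hmemc : c = z ∨ c = u ∨ c = v := (hmem c).mp (by simp)
  have hzmem : z = a ∨ z = b ∨ z = c := by
    have : z ∈ ({a, b, c} : Finset V) := by rw [hset]; simp
    simpa [Finset.mem_insert] using this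
  simp only [Finset.mem_insert, Finset.mem_singleton] at hval3
  rcases hval3 with hc | hc | hc
  · -- middle is z
    have hbz : b = z := by rw [← hRb, hc]
    subst hbz
    simp only [loB, hiB, if_pos hc] at h1 h2
    have ha' : a = u ∨ a = v := by
      rcases hmema with h | h | h
      · exact absurd h hab
      · exact Or.inl h
      · exact Or.inr h
    have hc' : c = u ∨ c = v := by
      rcases hmemc with h | h | h
      · exact absurd h (Ne.symm hbc)
      · exact Or.inl h
      · exact Or.inr h
    rcases ha' with rfl | rfl
    · rcases hc' with rfl | rfl
      · exact absurd rfl hac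
      · exact Or.inl ⟨by rw [hπu, hπz]; exact h1, by rw [hπz, hπv]; exact h2⟩
    · rcases hc' with rfl | rfl
      · exact Or.inr ⟨by rw [hπu, hπz]; exact h1, by rw [hπz, hπv]; exact h2⟩
      · exact absurd rfl hac
  · -- middle is u
    have hbu : b = u := by rw [← hRb, hc]
    subst hbu
    have hne : R {z, b, v} ≠ z := by rw [hc]; exact Ne.symm hzu
    simp only [loB, hiB, if_neg hne, if_pos hc] at h1 h2
    rcases hzmem with rfl | rfl | rfl
    · have hcv : c = v := by
        rcases hmemc with h | h | h
        · exact absurd h (Ne.symm hac)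
        · exact absurd h (Ne.symm hbc)
        · exact h
      subst hcv
      exact Or.inl ⟨by rw [hπz, hπu]; exact h2, by rw [hπu, hπv]; exact houv⟩
    · exact absurd rfl hzu
    · have hav : a = v := by
        rcases hmema with h | h | h
        · exact absurd h hac
        · exact absurd h hab
        · exact h
      subst hav
      exact Or.inr ⟨by rw [hπz, hπu]; exact h2, by rw [hπu, hπv]; exact houv⟩
  · -- middle is v
    have hbv : b = v := by rw [← hRb, hc]
    subst hbv
    have hne : R {z, u, b} ≠ z := by rw [hc]; exact Ne.symm hzv
    have hne2 : R {z, u, b} ≠ u := by rw [hc]; exact Ne.symm huv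
    simp only [loB, hiB, if_neg hne, if_neg hne2] at h1 h2
    rcases hzmem with rfl | rfl | rfl
    · have hcu : c = u := by
        rcases hmemc with h | h | h
        · exact absurd h (Ne.symm hac)
        · exact h
        · exact absurd h (Ne.symm hbc)
      subst hcu
      exact Or.inr ⟨by rw [hπu, hπv]; exact houv, by rw [hπv, hπz]; exact h1⟩
    · exact absurd rfl hzv
    · have hau : a = u := by
        rcases hmema with h | h | h
        · exact absurd h hac
        · exact h
        · exact absurd h hab
      subst hau
      exact Or.inl ⟨by rw [hπu, hπv]; exact houv, by rw [hπv, hπz]; exact h1⟩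

end Bridge

/-- A dense betweenness instance is encoded by a map `R` assigning to each
`3`-subset `{a, b, c}` its chosen vertex: `R {a, b, c} = b` means that the
betweenness triplet `abc` (choosing `b`) belongs to the instance. Validity
requires the chosen vertex to belong to the `3`-set. -/
def BetValid (R : Finset V → V) (S : Finset V) : Prop :=
  ∀ a b c : V, a ∈ S → b ∈ S → c ∈ S → a ≠ b → a ≠ c → b ≠ c →
    R {a, b, c} ∈ ({a, b, c} : Finset V)

/-- The betweenness instance `R` restricted to `S` is consistent: some linear
ordering of `S` makes all its triplets consistent. -/
def BetConsistentOn (R : Finset V → V) (S : Finset V) : Prop :=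
  ∃ σ : V → ℕ, Set.InjOn σ ↑S ∧
    ∀ a b c : V, a ∈ S → b ∈ S → c ∈ S → a ≠ b → a ≠ c → b ≠ c →
      R {a, b, c} = b → BtwOrd σ a b c

/-- A vertex `x` of a conflict `C = {x, b, c, d}` is a seed if `C` remains a
conflict for every possible choice of the triplet on `C \ {x}`. -/
def BetSeed (R : Finset V → V) (x : V) (C : Finset V) : Prop :=
  x ∈ C ∧ ∀ y ∈ C.erase x,
    ¬ BetConsistentOn (Function.update R (C.erase x) y) C

lemma gsp_neg (R : Finset V → V) (Wst : Finset V) (ρ : V → ℚ) (Q : Finset V)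
    (h : GSP R Wst ρ Q) : GSP R Wst (fun w => -(ρ w)) Q := by
  intro a b c ha hb hc hab hac hbc hR hg
  exact (btwq_neg ρ a b c).mpr (h a b c ha hb hc hab hac hbc hR hg)

lemma injon_neg (ρ : V → ℚ) (Q : Set V) (h : Set.InjOn ρ Q) :
    Set.InjOn (fun w => -(ρ w)) Q := by
  intro a ha b hb hab
  exact h ha hb (by dsimp only at hab; linarith)

section Shared

variable (R : Finset V → V) (Wst : Finset V)

/-- core of the shared-vertex compatibility: given a placement `ρ` of
`{z} ∪ X` monotone w.r.t. `π` on `X`, produce `t`. -/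
lemma shared_core [Fintype V] (hval : BetValid R Finset.univ)
    (S : Finset V) (z : V) (hzS : z ∉ S) (π : V → ℚ) (m M : ℚ)
    (hbound : ∀ s ∈ S, m < π s ∧ π s < M) (hmM : m < M)
    (u v u' v' : V) (hu : u ∈ S) (hv : v ∈ S) (hu' : u' ∈ S) (hv' : v' ∈ S)
    (ho1 : π u < π v) (ho2 : π u' < π v')
    (g1 : ¬(({z, u, v} : Finset V) ⊆ Wst)) (g2 : ¬(({z, u', v'} : Finset V) ⊆ Wst))
    (ρ : V → ℚ)
    (hρinj : Set.InjOn ρ ↑(insert z ({u, v, u', v'} : Finset V)))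
    (hρGS : GSP R Wst ρ (insert z ({u, v, u', v'} : Finset V)))
    (hmono3 : ∀ x ∈ ({u, v, u', v'} : Finset V), ∀ y ∈ ({u, v, u', v'} : Finset V),
      ρ x < ρ y → π x < π y) :
    ∃ t, m < t ∧ t < M ∧
      (loB R π z u v m < t ∧ t < hiB R π z u v M) ∧
      (loB R π z u' v' m < t ∧ t < hiB R π z u' v' M) := by
  classical
  set X : Finset V := {u, v, u', v'} with hXdef
  have hXS : X ⊆ S := by
    rw [hXdef]
    simp only [Finset.insert_subset_iff, Finset.singleton_subset_iff]
    exact ⟨hu, hv, hu', hv'⟩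
  have hzX : z ∉ X := fun h => hzS (hXS h)
  have hρz : ∀ x ∈ X, ρ x ≠ ρ z := by
    intro x hx heq
    exact hzX (hρinj (by simp [Finset.mem_insert, hx])
      (by simp [Finset.mem_insert]) heq ▸ hx)
  have hbX : ∀ x ∈ X, m < π x ∧ π x < M := fun x hx => hbound x (hXS hx)
  obtain ⟨t, htm, htM, hmono'⟩ :=
    order_extend X π ρ z hzX hmono3 hρz m M hmM hbX
  have transfer : ∀ a b c : V, a ∈ insert z X → b ∈ insert z X → c ∈ insert z X →
      BtwQ ρ a b c → BtwQ (Function.update π z t) a b c := by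
    intro a b c ha hb hc hB
    rcases hB with ⟨p, q⟩ | ⟨p, q⟩
    · exact Or.inl ⟨hmono' a ha b hb p, hmono' b hb c hc q⟩
    · exact Or.inr ⟨hmono' c hc b hb p, hmono' b hb a ha q⟩
  have hzu : z ≠ u := fun h => hzS (h ▸ hu)
  have hzv : z ≠ v := fun h => hzS (h ▸ hv)
  have hzu' : z ≠ u' := fun h => hzS (h ▸ hu')
  have hzv' : z ≠ v' := fun h => hzS (h ▸ hv')
  have huv : u ≠ v := fun h => by rw [h] at ho1; exact absurd ho1 (lt_irrefl _)
  have hu'v' : u' ≠ v' := fun h => by rw [h] at ho2; exact absurd ho2 (lt_irrefl _)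
  have hsub1 : ({z, u, v} : Finset V) ⊆ insert z X := by
    simp only [Finset.insert_subset_iff, Finset.singleton_subset_iff, hXdef]
    refine ⟨by simp, by simp, by simp⟩
  have hsub2 : ({z, u', v'} : Finset V) ⊆ insert z X := by
    simp only [Finset.insert_subset_iff, Finset.singleton_subset_iff, hXdef]
    refine ⟨by simp, by simp, by simp⟩
  have sat1 : ∀ a b c : V, a ≠ b → a ≠ c → b ≠ c → ({a, b, c} : Finset V) = {z, u, v} →
      R {a, b, c} = b → BtwQ (Function.update π z t) a b c := by
    intro a b c hab hac hbc hset hR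
    have hmem : ({a, b, c} : Finset V) ⊆ insert z X := hset ▸ hsub1
    have hB : BtwQ ρ a b c := hρGS a b c
      (hmem (by simp)) (hmem (by simp)) (hmem (by simp)) hab hac hbc hR
      (by rw [hset]; exact g1)
    exact transfer a b c (hmem (by simp)) (hmem (by simp)) (hmem (by simp)) hB
  have sat2 : ∀ a b c : V, a ≠ b → a ≠ c → b ≠ c → ({a, b, c} : Finset V) = {z, u', v'} →
      R {a, b, c} = b → BtwQ (Function.update π z t) a b c := by
    intro a b c hab hac hbc hset hR
    have hmem : ({a, b, c} : Finset V) ⊆ insert z X := hset ▸ hsub2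
    have hB : BtwQ ρ a b c := hρGS a b c
      (hmem (by simp)) (hmem (by simp)) (hmem (by simp)) hab hac hbc hR
      (by rw [hset]; exact g2)
    exact transfer a b c (hmem (by simp)) (hmem (by simp)) (hmem (by simp)) hB
  have hval1 : R {z, u, v} ∈ ({z, u, v} : Finset V) :=
    hval z u v (Finset.mem_univ _) (Finset.mem_univ _) (Finset.mem_univ _) hzu hzv huv
  have hval2 : R {z, u', v'} ∈ ({z, u', v'} : Finset V) :=
    hval z u' v' (Finset.mem_univ _) (Finset.mem_univ _) (Finset.mem_univ _) hzu' hzv' hu'v'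
  exact ⟨t, htm, htM,
    bridge_mk R π z u v m M t hzu hzv huv ho1 hval1 htm htM sat1,
    bridge_mk R π z u' v' m M t hzu' hzv' hu'v' ho2 hval2 htm htM sat2⟩

/-- shared-vertex compatibility. -/
lemma shared [Fintype V] (hval : BetValid R Finset.univ)
    (hH : ∀ Q : Finset V, Q.card = 4 →
      ∃ ρ : V → ℚ, Set.InjOn ρ ↑Q ∧ GSP R Wst ρ Q)
    (S : Finset V) (z : V) (hzS : z ∉ S) (π : V → ℚ)
    (hGS : GSP R Wst π S) (m M : ℚ)
    (hbound : ∀ s ∈ S, m < π s ∧ π s < M) (hmM : m < M)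
    (u v u' v' : V) (hu : u ∈ S) (hv : v ∈ S) (hu' : u' ∈ S) (hv' : v' ∈ S)
    (ho1 : π u < π v) (ho2 : π u' < π v')
    (g1 : ¬(({z, u, v} : Finset V) ⊆ Wst)) (g2 : ¬(({z, u', v'} : Finset V) ⊆ Wst))
    (hGX : ¬(({u, v, u', v'} : Finset V) ⊆ Wst))
    (hX3 : ({u, v, u', v'} : Finset V).card = 3) :
    ∃ t, m < t ∧ t < M ∧
      (loB R π z u v m < t ∧ t < hiB R π z u v M) ∧
      (loB R π z u' v' m < t ∧ t < hiB R π z u' v' M) := by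
  classical
  set X : Finset V := {u, v, u', v'} with hXdef
  have hXS : X ⊆ S := by
    rw [hXdef]
    simp only [Finset.insert_subset_iff, Finset.singleton_subset_iff]
    exact ⟨hu, hv, hu', hv'⟩
  have hzX : z ∉ X := fun h => hzS (hXS h)
  have hQ4 : (insert z X).card = 4 := by
    rw [Finset.card_insert_of_notMem hzX, hX3]
  obtain ⟨ρ, hρinj, hρGS⟩ := hH (insert z X) hQ4
  obtain ⟨x1, x2, x3, h12, h13, h23, hXeq⟩ := Finset.card_eq_three.mp hX3
  have hRX : R X ∈ X := by
    rw [hXeq]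
    exact hval x1 x2 x3 (Finset.mem_univ _) (Finset.mem_univ _) (Finset.mem_univ _) h12 h13 h23
  obtain ⟨a', b', c', hab', hac', hbc', hX', hRb'⟩ :
      ∃ a' b' c' : V, a' ≠ b' ∧ a' ≠ c' ∧ b' ≠ c' ∧
        X = ({a', b', c'} : Finset V) ∧ R X = b' := by
    rw [hXeq] at hRX
    simp only [Finset.mem_insert, Finset.mem_singleton] at hRX
    rcases hRX with h | h | h
    · exact ⟨x2, x1, x3, Ne.symm h12, h23, h13, by rw [hXeq, trip_comm12], by rw [hXeq]; exact h⟩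
    · exact ⟨x1, x2, x3, h12, h13, h23, hXeq, by rw [hXeq]; exact h⟩
    · exact ⟨x1, x3, x2, h13, h12, Ne.symm h23, by rw [hXeq, trip_comm23], by rw [hXeq]; exact h⟩
  have hRab : R {a', b', c'} = b' := by rw [← hX']; exact hRb'
  have hgood' : ¬(({a', b', c'} : Finset V) ⊆ Wst) := by rw [← hX']; exact hGX
  have hamem : a' ∈ X := by rw [hX']; simp
  have hbmem : b' ∈ X := by rw [hX']; simp
  have hcmem : c' ∈ X := by rw [hX']; simp
  have hπT : BtwQ π a' b' c' :=
    hGS a' b' c' (hXS hamem) (hXS hbmem) (hXS hcmem) hab' hac' hbc' hRab hgood'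
  have hρT : BtwQ ρ a' b' c' :=
    hρGS a' b' c' (Finset.mem_insert_of_mem hamem) (Finset.mem_insert_of_mem hbmem)
      (Finset.mem_insert_of_mem hcmem) hab' hac' hbc' hRab hgood'
  have hclass : ∀ x ∈ X, x = a' ∨ x = b' ∨ x = c' := by
    intro x hx
    rw [hX'] at hx
    simpa [Finset.mem_insert] using hx
  rcases mono_or_anti π ρ a' b' c' hπT hρT with hmono | hanti
  · exact shared_core R Wst hval S z hzS π m M hbound hmM u v u' v' hu hv hu' hv'
      ho1 ho2 g1 g2 ρ hρinj hρGS
      (fun x hx y hy hxy => hmono x (hclass x hx) y (hclass y hy) hxy)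
  · exact shared_core R Wst hval S z hzS π m M hbound hmM u v u' v' hu hv hu' hv'
      ho1 ho2 g1 g2 (fun w => -(ρ w))
      (injon_neg ρ _ hρinj) (gsp_neg R Wst ρ _ hρGS)
      (fun x hx y hy hxy => hanti y (hclass y hy) x (hclass x hx)
        (by linarith))

lemma card3 (a b c : V) (hab : a ≠ b) (hac : a ≠ c) (hbc : b ≠ c) :
    ({a, b, c} : Finset V).card = 3 :=
  Finset.card_eq_three.mpr ⟨a, b, c, hab, hac, hbc, rfl⟩

lemma quad_dup1 (a b c : V) : ({a, b, b, c} : Finset V) = {a, b, c} := by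
  ext x; simp only [Finset.mem_insert, Finset.mem_singleton]; tauto

lemma quad_dup2 (a b c : V) : ({a, c, b, c} : Finset V) = {a, b, c} := by
  ext x; simp only [Finset.mem_insert, Finset.mem_singleton]; tauto

lemma quad_dup3 (a b c : V) : ({b, a, b, c} : Finset V) = {a, b, c} := by
  ext x; simp only [Finset.mem_insert, Finset.mem_singleton]; tauto

lemma quad_dup4 (a b c : V) : ({c, a, b, c} : Finset V) = {a, b, c} := by
  ext x; simp only [Finset.mem_insert, Finset.mem_singleton]; tauto

set_option maxHeartbeats 2000000 in
lemma compat [Fintype V] (hval : BetValid R Finset.univ)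
    (hH : ∀ Q : Finset V, Q.card = 4 →
      ∃ ρ : V → ℚ, Set.InjOn ρ ↑Q ∧ GSP R Wst ρ Q)
    (S : Finset V) (z : V) (hzS : z ∉ S) (π : V → ℚ)
    (hGS : GSP R Wst π S) (hinj : Set.InjOn π ↑S) (m M : ℚ)
    (hbound : ∀ s ∈ S, m < π s ∧ π s < M) (hmM : m < M)
    (hstage : z ∈ Wst ∨ ∀ s ∈ S, s ∉ Wst)
    (u v u' v' : V) (hu : u ∈ S) (hv : v ∈ S) (hu' : u' ∈ S) (hv' : v' ∈ S)
    (ho1 : π u < π v) (ho2 : π u' < π v')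
    (g1 : ¬(({z, u, v} : Finset V) ⊆ Wst)) (g2 : ¬(({z, u', v'} : Finset V) ⊆ Wst)) :
    loB R π z u v m < hiB R π z u' v' M := by
  classical
  have hzu : z ≠ u := fun h => hzS (h ▸ hu)
  have hzv : z ≠ v := fun h => hzS (h ▸ hv)
  have hzu' : z ≠ u' := fun h => hzS (h ▸ hu')
  have hzv' : z ≠ v' := fun h => hzS (h ▸ hv')
  have huv : u ≠ v := fun h => by rw [h] at ho1; exact absurd ho1 (lt_irrefl _)
  have hu'v' : u' ≠ v' := fun h => by rw [h] at ho2; exact absurd ho2 (lt_irrefl _)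
  have hbu := hbound u hu
  have hbv := hbound v hv
  have hbu' := hbound u' hu'
  have hbv' := hbound v' hv'
  have hGX : ¬(({u, v, u', v'} : Finset V) ⊆ Wst) := by
    rcases hstage with hzW | hO
    · intro hsub
      apply g1
      intro x hx
      simp only [Finset.mem_insert, Finset.mem_singleton] at hx
      rcases hx with rfl | rfl | rfl
      · exact hzW
      · exact hsub (by simp)
      · exact hsub (by simp)
    · intro hsub
      exact hO u hu (hsub (by simp))
  by_cases h1 : u' = u
  · by_cases h4 : v' = v
    · -- identical pairs
      subst h1; subst h4
      simp only [loB, hiB]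
      split_ifs <;> linarith [hbu.1, hbv.2]
    · -- share u' = u, v' ∉ {u, v}
      have h3 : v' ≠ u := by rintro rfl; exact hu'v' h1
      have hX3 : ({u, v, u', v'} : Finset V).card = 3 := by
        have he : ({u, v, u', v'} : Finset V) = {v', u, v} := by
          rw [h1]
          ext x
          simp only [Finset.mem_insert, Finset.mem_singleton]
          tauto
        rw [he]
        exact card3 _ _ _ h3 h4 huv
      obtain ⟨t, _, _, ⟨ht1, _⟩, ⟨_, ht2⟩⟩ :=
        shared R Wst hval hH S z hzS π hGS m M hbound hmM u v u' v' hu hv hu' hv'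
          ho1 ho2 g1 g2 hGX hX3
      linarith
  · by_cases h2 : u' = v
    · by_cases h3 : v' = u
      · -- reversed pair : impossible
        subst h2; subst h3
        exact absurd ho2 (by linarith)
      · -- share u' = v
        have h4 : v' ≠ v := fun h => hu'v' (h2.trans h.symm)
        have hX3 : ({u, v, u', v'} : Finset V).card = 3 := by
          have he : ({u, v, u', v'} : Finset V) = {u, v, v'} := by
            rw [h2]
            ext x
            simp only [Finset.mem_insert, Finset.mem_singleton]
            tauto
          rw [he]
          exact card3 _ _ _ huv (fun h => h3 h.symm) (fun h => h4 h.symm)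
        obtain ⟨t, _, _, ⟨ht1, _⟩, ⟨_, ht2⟩⟩ :=
          shared R Wst hval hH S z hzS π hGS m M hbound hmM u v u' v' hu hv hu' hv'
            ho1 ho2 g1 g2 hGX hX3
        linarith
    · by_cases h3 : v' = u
      · -- share v' = u
        have hX3 : ({u, v, u', v'} : Finset V).card = 3 := by
          have he : ({u, v, u', v'} : Finset V) = {u', u, v} := by
            rw [h3]
            ext x
            simp only [Finset.mem_insert, Finset.mem_singleton]
            tauto
          rw [he]
          exact card3 _ _ _ h1 h2 huv
        obtain ⟨t, _, _, ⟨ht1, _⟩, ⟨_, ht2⟩⟩ :=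
          shared R Wst hval hH S z hzS π hGS m M hbound hmM u v u' v' hu hv hu' hv'
            ho1 ho2 g1 g2 hGX hX3
        linarith
      · by_cases h4 : v' = v
        · -- share v' = v
          have hX3 : ({u, v, u', v'} : Finset V).card = 3 := by
            have he : ({u, v, u', v'} : Finset V) = {u', u, v} := by
              rw [h4]
              ext x
              simp only [Finset.mem_insert, Finset.mem_singleton]
              tauto
            rw [he]
            exact card3 _ _ _ h1 h2 huv
          obtain ⟨t, _, _, ⟨ht1, _⟩, ⟨_, ht2⟩⟩ :=
            shared R Wst hval hH S z hzS π hGS m M hbound hmM u v u' v' hu hv hu' hv'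
              ho1 ho2 g1 g2 hGX hX3
          linarith
        · -- disjoint pairs
          by_contra hcon
          push_neg at hcon
          -- hcon : hiB R π z u' v' M ≤ loB R π z u v m
          have hval1 : R {z, u, v} ∈ ({z, u, v} : Finset V) :=
            hval z u v (Finset.mem_univ _) (Finset.mem_univ _) (Finset.mem_univ _) hzu hzv huv
          have hval2 : R {z, u', v'} ∈ ({z, u', v'} : Finset V) :=
            hval z u' v' (Finset.mem_univ _) (Finset.mem_univ _) (Finset.mem_univ _)
              hzu' hzv' hu'v'
          simp only [Finset.mem_insert, Finset.mem_singleton] at hval1 hval2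
          obtain ⟨p, hp, hhi⟩ : ∃ p, (p = u' ∨ p = v') ∧ hiB R π z u' v' M = π p := by
            rcases hval2 with hc | hc | hc
            · refine ⟨v', Or.inr rfl, ?_⟩
              simp only [hiB, if_pos hc]
            · refine ⟨u', Or.inl rfl, ?_⟩
              have hne : R {z, u', v'} ≠ z := by rw [hc]; exact Ne.symm hzu'
              simp only [hiB, if_neg hne, if_pos hc]
            · exfalso
              have hne : R {z, u', v'} ≠ z := by rw [hc]; exact Ne.symm hzv'
              have hne2 : R {z, u', v'} ≠ u' := by rw [hc]; exact Ne.symm hu'v'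
              simp only [hiB, if_neg hne, if_neg hne2, loB] at hcon
              split_ifs at hcon <;> linarith [hbu.2, hbv.2]
          obtain ⟨q, hq, hlo⟩ : ∃ q, (q = u ∨ q = v) ∧ loB R π z u v m = π q := by
            rcases hval1 with hc | hc | hc
            · refine ⟨u, Or.inl rfl, ?_⟩
              simp only [loB, if_pos hc]
            · exfalso
              have hne : R {z, u, v} ≠ z := by rw [hc]; exact Ne.symm hzu
              simp only [loB, if_neg hne, if_pos hc, hhi] at hcon
              rcases hp with rfl | rfl <;> linarith [hbu'.1, hbv'.1]
            · refine ⟨v, Or.inr rfl, ?_⟩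
              have hne : R {z, u, v} ≠ z := by rw [hc]; exact Ne.symm hzv
              have hne2 : R {z, u, v} ≠ u := by rw [hc]; exact Ne.symm huv
              simp only [loB, if_neg hne, if_neg hne2]
          have hpq : π p ≤ π q := by rw [← hhi, ← hlo]; exact hcon
          have hpS : p ∈ S := by rcases hp with rfl | rfl <;> assumption
          have hqS : q ∈ S := by rcases hq with rfl | rfl <;> assumption
          have hpqne : p ≠ q := by
            rcases hp with rfl | rfl <;> rcases hq with rfl | rfl <;>
              first
                | exact fun h => h1 h
                | exact fun h => h2 h
                | exact fun h => h3 h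
                | exact fun h => h4 h
          obtain ⟨p₀, hp₀, hg3a, hg3b, hgXa, hgXb⟩ :
              ∃ p₀, (p₀ = u' ∨ p₀ = v') ∧ ¬(({z, p₀, q} : Finset V) ⊆ Wst) ∧
                ¬(({z, q, p₀} : Finset V) ⊆ Wst) ∧
                ¬(({p₀, q, u, v} : Finset V) ⊆ Wst) ∧
                ¬(({p₀, q, u', v'} : Finset V) ⊆ Wst) := by
            rcases hstage with hzW | hO
            · obtain ⟨w, hwmem, hwW⟩ := Finset.not_subset.mp g2
              simp only [Finset.mem_insert, Finset.mem_singleton] at hwmem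
              rcases hwmem with rfl | rfl | rfl
              · exact absurd hzW hwW
              · exact ⟨w, Or.inl rfl, fun h => hwW (h (by simp)), fun h => hwW (h (by simp)),
                  fun h => hwW (h (by simp)), fun h => hwW (h (by simp))⟩
              · exact ⟨w, Or.inr rfl, fun h => hwW (h (by simp)), fun h => hwW (h (by simp)),
                  fun h => hwW (h (by simp)), fun h => hwW (h (by simp))⟩
            · have hqW := hO q hqS
              exact ⟨p, hp, fun h => hqW (h (by simp)), fun h => hqW (h (by simp)),
                fun h => hqW (h (by simp)), fun h => hqW (h (by simp))⟩
          have hp₀S : p₀ ∈ S := by rcases hp₀ with rfl | rfl <;> assumption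
          have hp₀q : p₀ ≠ q := by
            rcases hp₀ with rfl | rfl <;> rcases hq with rfl | rfl <;>
              first
                | exact fun h => h1 h
                | exact fun h => h2 h
                | exact fun h => h3 h
                | exact fun h => h4 h
          have hp₀u : p₀ ≠ u := by
            rcases hp₀ with rfl | rfl
            · exact h1
            · exact h3
          have hp₀v : p₀ ≠ v := by
            rcases hp₀ with rfl | rfl
            · exact h2
            · exact h4
          have hqu' : q ≠ u' := by
            rcases hq with rfl | rfl
            · exact fun h => h1 h.symm
            · exact fun h => h2 h.symm
          have hqv' : q ≠ v' := by
            rcases hq with rfl | rfl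
            · exact fun h => h3 h.symm
            · exact fun h => h4 h.symm
          have hzp₀ : z ≠ p₀ := fun h => hzS (h ▸ hp₀S)
          have hzq : z ≠ q := fun h => hzS (h ▸ hqS)
          have hval3 : R {z, p₀, q} ∈ ({z, p₀, q} : Finset V) :=
            hval z p₀ q (Finset.mem_univ _) (Finset.mem_univ _) (Finset.mem_univ _)
              hzp₀ hzq hp₀q
          have hval4 : R {z, q, p₀} ∈ ({z, q, p₀} : Finset V) :=
            hval z q p₀ (Finset.mem_univ _) (Finset.mem_univ _) (Finset.mem_univ _)
              hzq hzp₀ (Ne.symm hp₀q)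
          simp only [Finset.mem_insert, Finset.mem_singleton] at hval3 hval4
          have hπne : π p₀ ≠ π q := fun h => hp₀q (hinj hp₀S hqS h)
          rcases lt_or_gt_of_ne hπne with hor | hor
          · -- P3 = (p₀, q)
            have hX3a : ({p₀, q, u, v} : Finset V).card = 3 := by
              have he : ({p₀, q, u, v} : Finset V) = {p₀, u, v} := by
                rcases hq with h | h
                · rw [h]; exact quad_dup1 p₀ u v
                · rw [h]; exact quad_dup2 p₀ u v
              rw [he]
              exact card3 _ _ _ hp₀u hp₀v huv
            have hX3b : ({p₀, q, u', v'} : Finset V).card = 3 := by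
              have he : ({p₀, q, u', v'} : Finset V) = {q, u', v'} := by
                rcases hp₀ with h | h
                · rw [h]; exact quad_dup3 q u' v'
                · rw [h]; exact quad_dup4 q u' v'
              rw [he]
              exact card3 _ _ _ hqu' hqv' hu'v'
            obtain ⟨tb, _, _, ⟨htb1, htb2⟩, ⟨htb3, htb4⟩⟩ :=
              shared R Wst hval hH S z hzS π hGS m M hbound hmM p₀ q u v hp₀S hqS hu hv
                hor ho1 hg3a g1 hgXa hX3a
            obtain ⟨ta, _, _, ⟨hta1, hta2⟩, ⟨hta3, hta4⟩⟩ :=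
              shared R Wst hval hH S z hzS π hGS m M hbound hmM p₀ q u' v' hp₀S hqS hu' hv'
                hor ho2 hg3a g2 hgXb hX3b
            rw [hlo] at htb3
            rw [hhi] at hta4
            rcases hval3 with hc | hc | hc
            · simp only [loB, hiB, if_pos hc] at htb1 htb2
              linarith
            · have hne : R {z, p₀, q} ≠ z := by rw [hc]; exact Ne.symm hzp₀
              simp only [loB, hiB, if_neg hne, if_pos hc] at htb1 htb2
              linarith
            · have hne : R {z, p₀, q} ≠ z := by rw [hc]; exact Ne.symm hzq
              have hne2 : R {z, p₀, q} ≠ p₀ := by rw [hc]; exact Ne.symm hp₀q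
              simp only [loB, hiB, if_neg hne, if_neg hne2] at hta1 hta2
              linarith
          · -- P3 = (q, p₀)
            have hX3a : ({q, p₀, u, v} : Finset V).card = 3 := by
              have he : ({q, p₀, u, v} : Finset V) = {p₀, u, v} := by
                rcases hq with h | h
                · rw [h]; exact quad_dup3 p₀ u v
                · rw [h]; exact quad_dup4 p₀ u v
              rw [he]
              exact card3 _ _ _ hp₀u hp₀v huv
            have hX3b : ({q, p₀, u', v'} : Finset V).card = 3 := by
              have he : ({q, p₀, u', v'} : Finset V) = {q, u', v'} := by
                rcases hp₀ with h | h
                · rw [h]; exact quad_dup1 q u' v'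
                · rw [h]; exact quad_dup2 q u' v'
              rw [he]
              exact card3 _ _ _ hqu' hqv' hu'v'
            have hgXa' : ¬(({q, p₀, u, v} : Finset V) ⊆ Wst) := by
              rw [Finset.insert_comm]; exact hgXa
            have hgXb' : ¬(({q, p₀, u', v'} : Finset V) ⊆ Wst) := by
              rw [Finset.insert_comm]; exact hgXb
            obtain ⟨tb, _, _, ⟨htb1, htb2⟩, ⟨htb3, htb4⟩⟩ :=
              shared R Wst hval hH S z hzS π hGS m M hbound hmM q p₀ u v hqS hp₀S hu hv
                hor ho1 hg3b g1 hgXa' hX3a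
            obtain ⟨ta, _, _, ⟨hta1, hta2⟩, ⟨hta3, hta4⟩⟩ :=
              shared R Wst hval hH S z hzS π hGS m M hbound hmM q p₀ u' v' hqS hp₀S hu' hv'
                hor ho2 hg3b g2 hgXb' hX3b
            rw [hlo] at htb3
            rw [hhi] at hta4
            rcases hval4 with hc | hc | hc
            · simp only [loB, hiB, if_pos hc] at hta1 hta2
              linarith
            · have hne : R {z, q, p₀} ≠ z := by rw [hc]; exact Ne.symm hzq
              simp only [loB, hiB, if_neg hne, if_pos hc] at htb1 htb2
              linarith
            · have hne : R {z, q, p₀} ≠ z := by rw [hc]; exact Ne.symm hzp₀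
              have hne2 : R {z, q, p₀} ≠ q := by rw [hc]; exact hp₀q
              simp only [loB, hiB, if_neg hne, if_neg hne2] at hta1 hta2
              linarith

set_option maxHeartbeats 2000000 in
lemma insert_step [Fintype V] (hval : BetValid R Finset.univ)
    (hH : ∀ Q : Finset V, Q.card = 4 →
      ∃ ρ : V → ℚ, Set.InjOn ρ ↑Q ∧ GSP R Wst ρ Q)
    (S : Finset V) (z : V) (hzS : z ∉ S)
    (π : V → ℚ) (hinj : Set.InjOn π ↑S) (hGS : GSP R Wst π S)
    (hstage : z ∈ Wst ∨ ∀ s ∈ S, s ∉ Wst) :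
    ∃ π' : V → ℚ, Set.InjOn π' ↑(insert z S) ∧ GSP R Wst π' (insert z S) := by
  classical
  by_cases hSne : S.Nonempty
  case neg =>
    have hS : S = ∅ := Finset.not_nonempty_iff_eq_empty.mp hSne
    subst hS
    refine ⟨π, ?_, ?_⟩
    · intro a ha b hb _
      simp only [Finset.coe_insert, Finset.coe_empty, Set.mem_insert_iff,
        Set.mem_empty_iff_false, or_false] at ha hb
      rw [ha, hb]
    · intro a b c ha hb hc hab _ _ _ _
      simp only [Finset.mem_insert, Finset.notMem_empty, or_false] at ha hb
      exact absurd (ha.trans hb.symm) hab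
  case pos =>
    have himg : (S.image π).Nonempty := hSne.image π
    set m : ℚ := (S.image π).min' himg - 1 with hm
    set M : ℚ := (S.image π).max' himg + 1 with hM
    have hbound : ∀ s ∈ S, m < π s ∧ π s < M := by
      intro s hs
      constructor
      · have := Finset.min'_le (S.image π) (π s) (Finset.mem_image_of_mem π hs)
        rw [hm]; linarith
      · have := Finset.le_max' (S.image π) (π s) (Finset.mem_image_of_mem π hs)
        rw [hM]; linarith
    have hmM : m < M := by
      obtain ⟨s, hs⟩ := hSne
      have h := hbound s hs
      linarith [h.1, h.2]
    set GP : Finset (V × V) := (S ×ˢ S).filter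
      (fun pr => π pr.1 < π pr.2 ∧ ¬(({z, pr.1, pr.2} : Finset V) ⊆ Wst)) with hGP
    have hGPfacts : ∀ pr ∈ GP, pr.1 ∈ S ∧ pr.2 ∈ S ∧ π pr.1 < π pr.2 ∧
        ¬(({z, pr.1, pr.2} : Finset V) ⊆ Wst) := by
      intro pr hpr
      rw [hGP, Finset.mem_filter, Finset.mem_product] at hpr
      exact ⟨hpr.1.1, hpr.1.2, hpr.2.1, hpr.2.2⟩
    set Lset : Finset ℚ := insert m (GP.image (fun pr => loB R π z pr.1 pr.2 m)) with hLset
    set Uset : Finset ℚ := insert M (GP.image (fun pr => hiB R π z pr.1 pr.2 M)) with hUset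
    set L : ℚ := Lset.max' ⟨m, Finset.mem_insert_self _ _⟩ with hL
    set U : ℚ := Uset.min' ⟨M, Finset.mem_insert_self _ _⟩ with hU
    have hm_lt_hi : ∀ pr ∈ GP, m < hiB R π z pr.1 pr.2 M := by
      intro pr hpr
      obtain ⟨h1, h2, h3, _⟩ := hGPfacts pr hpr
      have b1 := hbound pr.1 h1
      have b2 := hbound pr.2 h2
      simp only [hiB]
      split_ifs <;> linarith [b1.1, b1.2, b2.1, b2.2]
    have hlo_lt_M : ∀ pr ∈ GP, loB R π z pr.1 pr.2 m < M := by
      intro pr hpr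
      obtain ⟨h1, h2, h3, _⟩ := hGPfacts pr hpr
      have b1 := hbound pr.1 h1
      have b2 := hbound pr.2 h2
      simp only [loB]
      split_ifs <;> linarith [b1.1, b1.2, b2.1, b2.2]
    have hLU : L < U := by
      rw [hL]; refine (Finset.max'_lt_iff _ _).mpr ?_
      intro l hl
      rw [hU]; refine (Finset.lt_min'_iff _ _).mpr ?_
      intro x hx
      rw [hLset, Finset.mem_insert] at hl
      rw [hUset, Finset.mem_insert] at hx
      rcases hl with rfl | hl
      · rcases hx with rfl | hx
        · exact hmM
        · obtain ⟨pr, hpr, rfl⟩ := Finset.mem_image.mp hx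
          exact hm_lt_hi pr hpr
      · obtain ⟨pr, hpr, rfl⟩ := Finset.mem_image.mp hl
        rcases hx with rfl | hx
        · exact hlo_lt_M pr hpr
        · obtain ⟨pr', hpr', rfl⟩ := Finset.mem_image.mp hx
          obtain ⟨h1, h2, h3, h4⟩ := hGPfacts pr hpr
          obtain ⟨h1', h2', h3', h4'⟩ := hGPfacts pr' hpr'
          exact compat R Wst hval hH S z hzS π hGS hinj m M hbound hmM hstage
            pr.1 pr.2 pr'.1 pr'.2 h1 h2 h1' h2' h3 h3' h4 h4'
    have hinf : (Set.Ioo L U).Infinite := Set.Ioo_infinite hLU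
    obtain ⟨t, htIoo, htnot⟩ :=
      (hinf.diff ((S.finite_toSet.image π))).nonempty
    have htL : L < t := htIoo.1
    have htU : t < U := htIoo.2
    have htnotin : ∀ s ∈ S, π s ≠ t := by
      intro s hs h
      exact htnot ⟨s, hs, h⟩
    have hIoo : ∀ pr ∈ GP, loB R π z pr.1 pr.2 m < t ∧ t < hiB R π z pr.1 pr.2 M := by
      intro pr hpr
      constructor
      · have : loB R π z pr.1 pr.2 m ∈ Lset := by
          rw [hLset, Finset.mem_insert]
          exact Or.inr (Finset.mem_image_of_mem _ hpr)
        have := Finset.le_max' _ _ this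
        linarith
      · have : hiB R π z pr.1 pr.2 M ∈ Uset := by
          rw [hUset, Finset.mem_insert]
          exact Or.inr (Finset.mem_image_of_mem _ hpr)
        have := Finset.min'_le _ _ this
        linarith
    set π' : V → ℚ := Function.update π z t with hπ'
    have hπ'S : ∀ s ∈ S, π' s = π s := by
      intro s hs
      rw [hπ']
      exact Function.update_of_ne (by rintro rfl; exact hzS hs) _ _
    have hπ'z : π' z = t := by rw [hπ']; exact Function.update_self _ _ _
    refine ⟨π', ?_, ?_⟩
    · intro a ha b hb hab
      simp only [Finset.coe_insert, Set.mem_insert_iff, Finset.mem_coe] at ha hb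
      rcases ha with rfl | ha
      · rcases hb with rfl | hb
        · rfl
        · rw [hπ'z, hπ'S b hb] at hab
          exact absurd hab.symm (htnotin b hb)
      · rcases hb with rfl | hb
        · rw [hπ'z, hπ'S a ha] at hab
          exact absurd hab (htnotin a ha)
        · rw [hπ'S a ha, hπ'S b hb] at hab
          exact hinj ha hb hab
    · intro a b c ha hb hc hab hac hbc hR hg
      rcases Finset.mem_insert.mp ha with rfl | haS
      · -- a = z
        rcases Finset.mem_insert.mp hb with rfl | hbS
        · exact absurd rfl hab
        rcases Finset.mem_insert.mp hc with rfl | hcS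
        · exact absurd rfl hac
        have hbc' : π b ≠ π c := fun h => hbc (hinj hbS hcS h)
        rcases lt_or_gt_of_ne hbc' with ho | ho
        · have hpr : (b, c) ∈ GP := by
            rw [hGP, Finset.mem_filter, Finset.mem_product]
            exact ⟨⟨hbS, hcS⟩, ho, hg⟩
          obtain ⟨hlo', hhi'⟩ := hIoo (b, c) hpr
          exact bridge_use R π a b c m M t hab hac
            hbc ho (hval a b c (Finset.mem_univ _) (Finset.mem_univ _) (Finset.mem_univ _)
              hab hac hbc) hlo' hhi' a b c hab hac hbc rfl hR
        · have hg' : ¬(({a, c, b} : Finset V) ⊆ Wst) := by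
            rw [← trip_comm23]; exact hg
          have hpr : (c, b) ∈ GP := by
            rw [hGP, Finset.mem_filter, Finset.mem_product]
            exact ⟨⟨hcS, hbS⟩, ho, hg'⟩
          obtain ⟨hlo', hhi'⟩ := hIoo (c, b) hpr
          exact bridge_use R π a c b m M t hac hab
            (Ne.symm hbc) ho (hval a c b (Finset.mem_univ _) (Finset.mem_univ _)
              (Finset.mem_univ _) hac hab (Ne.symm hbc)) hlo' hhi'
            a b c hab hac hbc (trip_comm23 a b c) hR
      · rcases Finset.mem_insert.mp hb with rfl | hbS
        · -- b = z
          rcases Finset.mem_insert.mp hc with rfl | hcS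
          · exact absurd rfl hbc
          have hac' : π a ≠ π c := fun h => hac (hinj haS hcS h)
          rcases lt_or_gt_of_ne hac' with ho | ho
          · have hg' : ¬(({b, a, c} : Finset V) ⊆ Wst) := by
              rw [← trip_comm12]; exact hg
            have hpr : (a, c) ∈ GP := by
              rw [hGP, Finset.mem_filter, Finset.mem_product]
              exact ⟨⟨haS, hcS⟩, ho, hg'⟩
            obtain ⟨hlo', hhi'⟩ := hIoo (a, c) hpr
            exact bridge_use R π b a c m M t (Ne.symm hab) hbc
              hac ho (hval b a c (Finset.mem_univ _) (Finset.mem_univ _) (Finset.mem_univ _)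
                (Ne.symm hab) hbc hac) hlo' hhi'
              a b c hab hac hbc (trip_comm12 a b c) hR
          · have hg' : ¬(({b, c, a} : Finset V) ⊆ Wst) := by
              rw [trip_rot]; exact hg
            have hpr : (c, a) ∈ GP := by
              rw [hGP, Finset.mem_filter, Finset.mem_product]
              exact ⟨⟨hcS, haS⟩, ho, hg'⟩
            obtain ⟨hlo', hhi'⟩ := hIoo (c, a) hpr
            exact bridge_use R π b c a m M t hbc (Ne.symm hab)
              (Ne.symm hac) ho (hval b c a (Finset.mem_univ _) (Finset.mem_univ _)
                (Finset.mem_univ _) hbc (Ne.symm hab) (Ne.symm hac)) hlo' hhi'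
              a b c hab hac hbc (trip_rot2 a b c) hR
        · rcases Finset.mem_insert.mp hc with rfl | hcS
          · -- c = z
            have hab' : π a ≠ π b := fun h => hab (hinj haS hbS h)
            rcases lt_or_gt_of_ne hab' with ho | ho
            · have hg' : ¬(({c, a, b} : Finset V) ⊆ Wst) := by
                rw [trip_rot2]; exact hg
              have hpr : (a, b) ∈ GP := by
                rw [hGP, Finset.mem_filter, Finset.mem_product]
                exact ⟨⟨haS, hbS⟩, ho, hg'⟩
              obtain ⟨hlo', hhi'⟩ := hIoo (a, b) hpr
              exact bridge_use R π c a b m M t (Ne.symm hac) (Ne.symm hbc)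
                hab ho (hval c a b (Finset.mem_univ _) (Finset.mem_univ _) (Finset.mem_univ _)
                  (Ne.symm hac) (Ne.symm hbc) hab) hlo' hhi'
                a b c hab hac hbc (trip_rot a b c) hR
            · have hg' : ¬(({c, b, a} : Finset V) ⊆ Wst) := by
                rw [show ({c, b, a} : Finset V) = {a, b, c} from
                  ((trip_comm12 a b c).trans (trip_rot b a c)).symm]
                exact hg
              have hpr : (b, a) ∈ GP := by
                rw [hGP, Finset.mem_filter, Finset.mem_product]
                exact ⟨⟨hbS, haS⟩, ho, hg'⟩
              obtain ⟨hlo', hhi'⟩ := hIoo (b, a) hpr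
              exact bridge_use R π c b a m M t (Ne.symm hbc) (Ne.symm hac)
                (Ne.symm hab) ho (hval c b a (Finset.mem_univ _) (Finset.mem_univ _)
                  (Finset.mem_univ _) (Ne.symm hbc) (Ne.symm hac) (Ne.symm hab)) hlo' hhi'
                a b c hab hac hbc ((trip_comm12 a b c).trans (trip_rot b a c)) hR
          · -- all in S
            have ea := hπ'S a haS
            have eb := hπ'S b hbS
            have ec := hπ'S c hcS
            have := hGS a b c haS hbS hcS hab hac hbc hR hg
            unfold BtwQ at this ⊢
            rw [ea, eb, ec]
            exact this

lemma build_order [Fintype V] (hval : BetValid R Finset.univ)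
    (hH : ∀ Q : Finset V, Q.card = 4 →
      ∃ ρ : V → ℚ, Set.InjOn ρ ↑Q ∧ GSP R Wst ρ Q) :
    ∃ π : V → ℚ, Set.InjOn π ↑(Finset.univ : Finset V) ∧
      GSP R Wst π Finset.univ := by
  classical
  have stage1 : ∀ S : Finset V, (∀ s ∈ S, s ∉ Wst) →
      ∃ π : V → ℚ, Set.InjOn π ↑S ∧ GSP R Wst π S := by
    intro S
    induction S using Finset.induction_on with
    | empty =>
      intro _
      refine ⟨fun _ => 0, ?_, ?_⟩
      · simp
      · intro a b c ha
        exact absurd ha (Finset.notMem_empty a)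
    | @insert z S hzS ih =>
      intro hO
      have hO' : ∀ s ∈ S, s ∉ Wst := fun s hs => hO s (Finset.mem_insert_of_mem hs)
      obtain ⟨π, hinj, hGS⟩ := ih hO'
      exact insert_step R Wst hval hH S z hzS π hinj hGS (Or.inr hO')
  set Oall : Finset V := Finset.univ.filter (fun v => v ∉ Wst) with hOall
  have hOgood : ∀ s ∈ Oall, s ∉ Wst := by
    intro s hs
    rw [hOall, Finset.mem_filter] at hs
    exact hs.2
  have stage2 : ∀ T : Finset V, (∀ s ∈ T, s ∈ Wst) →
      ∃ π : V → ℚ, Set.InjOn π ↑(T ∪ Oall) ∧ GSP R Wst π (T ∪ Oall) := by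
    intro T
    induction T using Finset.induction_on with
    | empty =>
      intro _
      rw [Finset.empty_union]
      exact stage1 Oall hOgood
    | @insert w T hwT ih =>
      intro hW
      have hW' : ∀ s ∈ T, s ∈ Wst := fun s hs => hW s (Finset.mem_insert_of_mem hs)
      obtain ⟨π, hinj, hGS⟩ := ih hW'
      have hwW : w ∈ Wst := hW w (Finset.mem_insert_self _ _)
      have hwnot : w ∉ T ∪ Oall := by
        rw [Finset.mem_union]
        rintro (h | h)
        · exact hwT h
        · exact hOgood w h hwW
      have heq : insert w (T ∪ Oall) = insert w T ∪ Oall := by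
        rw [Finset.insert_union]
      obtain ⟨π', h1, h2⟩ :=
        insert_step R Wst hval hH (T ∪ Oall) w hwnot π hinj hGS (Or.inl hwW)
      rw [heq] at h1 h2
      exact ⟨π', h1, h2⟩
  obtain ⟨π, h1, h2⟩ := stage2 (Finset.univ.filter (fun v => v ∈ Wst)) (by
    intro s hs
    rw [Finset.mem_filter] at hs
    exact hs.2)
  have huniv : Finset.univ.filter (fun v => v ∈ Wst) ∪ Oall = Finset.univ := by
    rw [hOall]
    exact Finset.filter_union_filter_not_eq _ _
  rw [huniv] at h1 h2
  exact ⟨π, h1, h2⟩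

end Shared

lemma claimH [Fintype V] (R : Finset V → V) (Wst : Finset V)
    (hval : BetValid R Finset.univ)
    (hmaxi : ∀ D : Finset V, D.card = 4 → ¬ BetConsistentOn R D →
      ¬ (((D ∩ Wst).card ≤ 2) ∨
         ∃ x, D \ Wst = {x} ∧ BetSeed R x D)) :
    ∀ Q : Finset V, Q.card = 4 →
      ∃ ρ : V → ℚ, Set.InjOn ρ ↑Q ∧ GSP R Wst ρ Q := by
  classical
  intro Q hQ4
  by_cases hcons : BetConsistentOn R Q
  · obtain ⟨σ, hinj, hsat⟩ := hcons
    refine ⟨fun v => (σ v : ℚ), ?_, ?_⟩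
    · intro a ha b hb h
      exact hinj ha hb (Nat.cast_injective h)
    · intro a b c ha hb hc hab hac hbc hR _
      have := hsat a b c ha hb hc hab hac hbc hR
      rcases this with ⟨h1, h2⟩ | ⟨h1, h2⟩
      · exact Or.inl ⟨by show (σ a : ℚ) < σ b; exact_mod_cast h1,
          by show (σ b : ℚ) < σ c; exact_mod_cast h2⟩
      · exact Or.inr ⟨by show (σ c : ℚ) < σ b; exact_mod_cast h1,
          by show (σ b : ℚ) < σ a; exact_mod_cast h2⟩
  · have hmx := hmaxi Q hQ4 hcons
    push_neg at hmx
    obtain ⟨hcard, hseed⟩ := hmx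
    by_cases hsub : Q ⊆ Wst
    · obtain ⟨f, hf⟩ := Countable.exists_injective_nat V
      refine ⟨fun v => (f v : ℚ), ?_, ?_⟩
      · intro a _ b _ h
        exact hf (Nat.cast_injective h)
      · intro a b c ha hb hc _ _ _ _ hg
        exfalso
        apply hg
        intro x hx
        apply hsub
        simp only [Finset.mem_insert, Finset.mem_singleton] at hx
        rcases hx with rfl | rfl | rfl <;> assumption
    · have hsum : (Q ∩ Wst).card + (Q \ Wst).card = 4 := by
        rw [Finset.card_inter_add_card_sdiff, hQ4]
      have hdne : (Q \ Wst) ≠ ∅ := by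
        rw [Ne, Finset.sdiff_eq_empty_iff_subset]
        exact hsub
      have hd1 : (Q \ Wst).card = 1 := by
        have h3 : 2 < (Q ∩ Wst).card := by omega
        have h0 : 0 < (Q \ Wst).card :=
          Finset.card_pos.mpr (Finset.nonempty_iff_ne_empty.mpr hdne)
        omega
      obtain ⟨x, hx⟩ := Finset.card_eq_one.mp hd1
      have hxQW : x ∈ Q \ Wst := hx ▸ Finset.mem_singleton_self x
      have hxQ : x ∈ Q := (Finset.mem_sdiff.mp hxQW).1
      have hnseed : ¬ BetSeed R x Q := hseed x hx
      rw [BetSeed] at hnseed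
      push_neg at hnseed
      obtain ⟨y, hyQ, hycons⟩ := hnseed hxQ
      obtain ⟨σ, hinj, hsat⟩ := hycons
      refine ⟨fun v => (σ v : ℚ), ?_, ?_⟩
      · intro a ha b hb h
        exact hinj ha hb (Nat.cast_injective h)
      · intro a b c ha hb hc hab hac hbc hR hg
        have hxabc : x ∈ ({a, b, c} : Finset V) := by
          obtain ⟨w, hw1, hw2⟩ := Finset.not_subset.mp hg
          have hwQ : w ∈ Q := by
            simp only [Finset.mem_insert, Finset.mem_singleton] at hw1
            rcases hw1 with rfl | rfl | rfl <;> assumption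
          have : w ∈ Q \ Wst := Finset.mem_sdiff.mpr ⟨hwQ, hw2⟩
          rw [hx, Finset.mem_singleton] at this
          rw [← this]
          exact hw1
        have hne : ({a, b, c} : Finset V) ≠ Q.erase x := by
          intro h
          rw [h] at hxabc
          exact (Finset.notMem_erase x Q) hxabc
        have hupd : Function.update R (Q.erase x) y {a, b, c} = b := by
          rw [Function.update_of_ne hne]
          exact hR
        have := hsat a b c ha hb hc hab hac hbc hupd
        rcases this with ⟨h1, h2⟩ | ⟨h1, h2⟩
        · exact Or.inl ⟨by show (σ a : ℚ) < σ b; exact_mod_cast h1,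
            by show (σ b : ℚ) < σ c; exact_mod_cast h2⟩
        · exact Or.inr ⟨by show (σ c : ℚ) < σ b; exact_mod_cast h1,
            by show (σ b : ℚ) < σ a; exact_mod_cast h2⟩

/-- Let `B = (V, R)` be a dense betweenness instance and `C = (C_1, …, C_l)`
a maximal conflict packing. Then there is a linear ordering `σ` of `V` such
that every triplet of `R` inconsistent with `σ` has all three of its vertices
in `V(C)`. -/
theorem bet_maximal_packing_nice_ordering [Fintype V]
    (R : Finset V → V) (hval : BetValid R Finset.univ)
    (l : ℕ) (C : Fin l → Finset V)
    (hC4 : ∀ i, (C i).card = 4)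
    (hCconf : ∀ i, ¬ BetConsistentOn R (C i))
    (hstep : ∀ i : Fin l, 0 < (i : ℕ) →
      ((C i ∩ (Finset.univ.filter (fun j => j < i)).biUnion C).card ≤ 2 ∨
       ∃ x, C i \ (Finset.univ.filter (fun j => j < i)).biUnion C = {x} ∧
         BetSeed R x (C i)))
    (hmaxi : ∀ D : Finset V, D.card = 4 → ¬ BetConsistentOn R D →
      ¬ (((D ∩ (Finset.univ : Finset (Fin l)).biUnion C).card ≤ 2) ∨
         ∃ x, D \ (Finset.univ : Finset (Fin l)).biUnion C = {x} ∧ BetSeed R x D)) :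
    ∃ σ : V → ℕ, Function.Injective σ ∧
      ∀ a b c : V, a ≠ b → a ≠ c → b ≠ c → R {a, b, c} = b →
        ¬ BtwOrd σ a b c →
        a ∈ (Finset.univ : Finset (Fin l)).biUnion C ∧
        b ∈ (Finset.univ : Finset (Fin l)).biUnion C ∧
        c ∈ (Finset.univ : Finset (Fin l)).biUnion C := by
  classical
  set Wst : Finset V := (Finset.univ : Finset (Fin l)).biUnion C with hWst
  have hH := claimH R Wst hval hmaxi
  obtain ⟨π, hinj, hGS⟩ := build_order R Wst hval hH
  have hinj' : Function.Injective π := fun a b h =>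
    hinj (by simp) (by simp) h
  obtain ⟨g, hginj, hgiff⟩ := rank_conv π hinj'
  refine ⟨g, hginj, ?_⟩
  intro a b c hab hac hbc hR hnbtw
  by_contra hcon
  have hg : ¬(({a, b, c} : Finset V) ⊆ Wst) := by
    intro hsubW
    exact hcon ⟨hsubW (by simp), hsubW (by simp), hsubW (by simp)⟩
  have hq := hGS a b c (Finset.mem_univ _) (Finset.mem_univ _) (Finset.mem_univ _)
    hab hac hbc hR hg
  apply hnbtw
  rcases hq with ⟨h1, h2⟩ | ⟨h1, h2⟩
  · exact Or.inl ⟨(hgiff _ _).mp h1, (hgiff _ _).mp h2⟩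
  · exact Or.inr ⟨(hgiff _ _).mp h1, (hgiff _ _).mp h2⟩
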